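/- arXiv:2601.03815 — 3 statements merged into one kernel-verified Lean document; each statement's English description precedes it below -/
import Mathlib

section
/- Let S ∈ ℝ^{p×p} be symmetric positive semidefinite with exactly ψ nonzero eigenvalues, all simple: λ_1 > λ_2 > … > λ_ψ > 0, and suppose ψ ≤ n − 1 for a positive integer n. Define, for real x > 0 outside {λ_1,…,λ_ψ}, the function m̄_n(x) = −(1 − c_n)/x + c_n m_n(x), where c_n = p/n and m_n(x) = p⁻¹ ∑_{i=1}^p (λ_i^S − x)⁻¹ is summed over all p eigenvalues of S (including the zero eigenvalues). Then m̄_n has exactly ψ zeros η_1 > η_2 > … > η_ψ in (0, ∞), and they strictly interlace the nonzero eigenvalues: λ_1 > η_1 > λ_2 > η_2 > … > λ_ψ > η_ψ > 0. -/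
open Matrix Set Filter
open scoped BigOperators Topology

noncomputable section

/-- The Stieltjes transform `m_n(x) = p⁻¹ tr (S − xI)⁻¹` of the empirical spectral
distribution of `S`, at a real point `x` outside the spectrum. -/
def mEsdReal (p : ℕ) (S : Matrix (Fin p) (Fin p) ℝ) (x : ℝ) : ℝ :=
  (p : ℝ)⁻¹ * ((S - x • (1 : Matrix (Fin p) (Fin p) ℝ))⁻¹).trace

/-- The companion transform `m̄_n(x) = −(1−c_n)/x + c_n m_n(x)`, `c_n = p/n`. -/
def mbarReal (p n : ℕ) (S : Matrix (Fin p) (Fin p) ℝ) (x : ℝ) : ℝ :=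
  -(1 - (p : ℝ) / (n : ℝ)) / x + (p : ℝ) / (n : ℝ) * mEsdReal p S x



lemma vmv_mul_vmv {p : ℕ} (a b c d : Fin p → ℝ) :
    vecMulVec a b * vecMulVec c d = (b ⬝ᵥ c) • vecMulVec a d := by
  ext i j
  simp only [Matrix.mul_apply, vecMulVec_apply, Matrix.smul_apply, smul_eq_mul, dotProduct,
    Finset.sum_mul]
  exact Finset.sum_congr rfl fun k _ => by ring

lemma trace_vmv {p : ℕ} (a b : Fin p → ℝ) : (vecMulVec a b).trace = a ⬝ᵥ b := by
  simp [Matrix.trace, Matrix.diag, vecMulVec_apply, dotProduct]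

/-- Closed formula for the companion transform. -/
lemma mbar_formula {p : ℕ} (n ψ : ℕ) (hn : 0 < n)
    (S : Matrix (Fin p) (Fin p) ℝ)
    (lam : Fin ψ → ℝ) (v : Fin ψ → Fin p → ℝ)
    (hortho : ∀ i j, v i ⬝ᵥ v j = if i = j then (1 : ℝ) else 0)
    (hdecomp : S = ∑ i, lam i • vecMulVec (v i) (v i))
    (x : ℝ) (hx : x ≠ 0) (hxl : ∀ i, x ≠ lam i) :
    mbarReal p n S x = (n : ℝ)⁻¹ * (((ψ : ℝ) - n) * x⁻¹ + ∑ i, (lam i - x)⁻¹) := by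
  have hn0 : (n : ℝ) ≠ 0 := Nat.cast_ne_zero.mpr hn.ne'
  rcases Nat.eq_zero_or_pos p with hp | hp
  · -- p = 0 : then ψ = 0 as well
    have hψ : ψ = 0 := by
      by_contra h
      have i : Fin ψ := ⟨0, Nat.pos_of_ne_zero h⟩
      have := hortho i i
      simp only [if_pos rfl] at this
      subst hp
      simp [dotProduct] at this
    subst hψ
    have htr : ((S - x • (1 : Matrix (Fin p) (Fin p) ℝ))⁻¹).trace = 0 := by
      subst hp
      simp [Matrix.trace]
    simp only [mbarReal, mEsdReal, htr, hp]
    push_cast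
    field_simp
    simp
  · -- p > 0
    set P : Matrix (Fin p) (Fin p) ℝ := ∑ i, vecMulVec (v i) (v i) with hP
    set M : Matrix (Fin p) (Fin p) ℝ :=
      (∑ i, (lam i - x)⁻¹ • vecMulVec (v i) (v i)) + (-x⁻¹) • (1 - P) with hM
    have hSV : ∀ j, S * vecMulVec (v j) (v j) = lam j • vecMulVec (v j) (v j) := by
      intro j
      rw [hdecomp, Finset.sum_mul]
      rw [Finset.sum_eq_single j]
      · rw [Matrix.smul_mul, vmv_mul_vmv, hortho j j, if_pos rfl, one_smul]
      · intro i _ hij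
        rw [Matrix.smul_mul, vmv_mul_vmv, hortho i j, if_neg hij, zero_smul, smul_zero]
      · intro h; exact absurd (Finset.mem_univ j) h
    have hSP : S * P = S := by
      rw [hP, Finset.mul_sum]
      rw [hdecomp]
      exact Finset.sum_congr rfl fun j _ => by rw [← hdecomp, hSV j]
    have hright : (S - x • (1 : Matrix (Fin p) (Fin p) ℝ)) * M = 1 := by
      rw [hM, mul_add, Finset.mul_sum]
      have h1 : ∀ j, (S - x • (1 : Matrix (Fin p) (Fin p) ℝ)) * ((lam j - x)⁻¹ • vecMulVec (v j) (v j)) = vecMulVec (v j) (v j) := by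
        intro j
        rw [Matrix.mul_smul, Matrix.sub_mul, hSV j, Matrix.smul_mul, Matrix.one_mul,
          ← sub_smul, smul_smul, inv_mul_cancel₀ (sub_ne_zero.mpr fun h => hxl j h.symm),
          one_smul]
      have h2 : (S - x • (1 : Matrix (Fin p) (Fin p) ℝ)) * ((-x⁻¹) • (1 - P)) = 1 - P := by
        rw [Matrix.mul_smul, Matrix.mul_sub, Matrix.mul_one, Matrix.sub_mul, hSP,
          Matrix.smul_mul, Matrix.one_mul]
        have : S - x • (1 : Matrix (Fin p) (Fin p) ℝ) - (S - x • P) = (-x) • (1 - P) := by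
          rw [smul_sub, neg_smul, neg_smul]
          abel
        rw [this, smul_smul, neg_mul, mul_neg, neg_neg, inv_mul_cancel₀ hx, one_smul]
      calc (∑ j, (S - x • (1 : Matrix (Fin p) (Fin p) ℝ)) * ((lam j - x)⁻¹ • vecMulVec (v j) (v j)))
            + (S - x • (1 : Matrix (Fin p) (Fin p) ℝ)) * ((-x⁻¹) • (1 - P))
          = (∑ j, vecMulVec (v j) (v j)) + (1 - P) := by
            rw [h2]; congr 1; exact Finset.sum_congr rfl fun j _ => h1 j
        _ = 1 := by rw [← hP]; abel
    have hinv : (S - x • (1 : Matrix (Fin p) (Fin p) ℝ))⁻¹ = M := inv_eq_right_inv hright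
    have htrP : P.trace = (ψ : ℝ) := by
      rw [hP, Matrix.trace_sum]
      simp only [trace_vmv]
      rw [Finset.sum_congr rfl fun i _ => by rw [hortho i i, if_pos rfl]]
      simp
    have htrM : M.trace = (∑ i, (lam i - x)⁻¹) + (-x⁻¹) * ((p : ℝ) - ψ) := by
      rw [hM, Matrix.trace_add, Matrix.trace_smul, Matrix.trace_sub, Matrix.trace_one, htrP,
        Matrix.trace_sum]
      simp only [Matrix.trace_smul, trace_vmv]
      rw [Finset.sum_congr rfl fun i _ => by rw [hortho i i, if_pos rfl, smul_eq_mul, mul_one]]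
      simp [smul_eq_mul]
    have hp0 : (p : ℝ) ≠ 0 := Nat.cast_ne_zero.mpr hp.ne'
    rw [mbarReal, mEsdReal, hinv, htrM]
    field_simp
    ring
/-- Existence of a zero on an open interval from IVT plus divergence at the endpoints. -/
lemma exists_zero_Ioo (F : ℝ → ℝ) {L U : ℝ} (hLU : L < U)
    (hcont : ContinuousOn F (Set.Ioo L U))
    (htop : Tendsto F (𝓝[Set.Ioo L U] U) atTop)
    (hbot : Tendsto F (𝓝[Set.Ioo L U] L) atBot) :
    ∃ η ∈ Set.Ioo L U, F η = 0 := by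
  have hU : (𝓝[Set.Ioo L U] U).NeBot := right_nhdsWithin_Ioo_neBot hLU
  have hL : (𝓝[Set.Ioo L U] L).NeBot := left_nhdsWithin_Ioo_neBot hLU
  obtain ⟨b, hbmem, hbpos⟩ : ∃ b, b ∈ Set.Ioo L U ∧ 0 < F b := by
    have h1 : ∀ᶠ y in 𝓝[Set.Ioo L U] U, 0 < F y := htop.eventually (eventually_gt_atTop 0)
    have h2 : ∀ᶠ y in 𝓝[Set.Ioo L U] U, y ∈ Set.Ioo L U := self_mem_nhdsWithin
    exact (h2.and h1).exists
  obtain ⟨a, hamem, haneg⟩ : ∃ a, a ∈ Set.Ioo L U ∧ F a < 0 := by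
    have h1 : ∀ᶠ y in 𝓝[Set.Ioo L U] L, F y < 0 := hbot.eventually (eventually_lt_atBot 0)
    have h2 : ∀ᶠ y in 𝓝[Set.Ioo L U] L, y ∈ Set.Ioo L U := self_mem_nhdsWithin
    exact (h2.and h1).exists
  rcases lt_trichotomy a b with hab | hab | hab
  · have hsub : Set.Icc a b ⊆ Set.Ioo L U := fun y hy =>
      ⟨lt_of_lt_of_le hamem.1 hy.1, lt_of_le_of_lt hy.2 hbmem.2⟩
    obtain ⟨η, hη, hFη⟩ := intermediate_value_Ioo hab.le (hcont.mono hsub)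
      (Set.mem_Ioo.mpr ⟨haneg, hbpos⟩)
    exact ⟨η, hsub ⟨hη.1.le, hη.2.le⟩, hFη⟩
  · exact absurd (hab ▸ haneg) (asymm hbpos)
  · have hsub : Set.Icc b a ⊆ Set.Ioo L U := fun y hy =>
      ⟨lt_of_lt_of_le hbmem.1 hy.1, lt_of_le_of_lt hy.2 hamem.2⟩
    obtain ⟨η, hη, hFη⟩ := intermediate_value_Ioo' hab.le (hcont.mono hsub)
      (Set.mem_Ioo.mpr ⟨haneg, hbpos⟩)
    exact ⟨η, hsub ⟨hη.1.le, hη.2.le⟩, hFη⟩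

lemma F_hasDerivAt (ψ n : ℕ) (lam : Fin ψ → ℝ) {x : ℝ} (hx : x ≠ 0)
    (hxl : ∀ i, x ≠ lam i) :
    HasDerivAt (fun y => ((ψ : ℝ) - n) * y⁻¹ + ∑ i, (lam i - y)⁻¹)
      (((ψ : ℝ) - n) * (-(x ^ 2)⁻¹) + ∑ i, ((lam i - x) ^ 2)⁻¹) x := by
  have h1 : HasDerivAt (fun y : ℝ => ((ψ : ℝ) - n) * y⁻¹) (((ψ : ℝ) - n) * (-(x ^ 2)⁻¹)) x :=
    (hasDerivAt_inv hx).const_mul _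
  have h2 : HasDerivAt (fun y => ∑ i, (lam i - y)⁻¹) (∑ i, ((lam i - x) ^ 2)⁻¹) x := by
    apply HasDerivAt.fun_sum
    intro i _
    have hne : lam i - x ≠ 0 := sub_ne_zero.mpr fun h => hxl i h.symm
    have hlin : HasDerivAt (fun y : ℝ => lam i - y) (-1) x := by
      simpa using (hasDerivAt_const x (lam i)).fun_sub (hasDerivAt_id x)
    have := (hasDerivAt_inv hne).comp x hlin
    exact this.congr_deriv (by ring)
  exact h1.add h2
/-- interlacing of the zeros of the companion Stieltjes transform.
Let `S ∈ ℝ^{p×p}` be symmetric positive semidefinite with exactly `ψ` nonzero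
eigenvalues, all simple, `λ_1 > … > λ_ψ > 0` (encoded by the spectral decomposition
`S = ∑_{i<ψ} λ_i v_i v_iᵀ` with orthonormal `v_i` and strictly decreasing positive `λ`),
and let `ψ ≤ n − 1` for a positive integer `n`.  Then `m̄_n` has exactly `ψ` zeros
`η_1 > … > η_ψ` in `(0,∞)`, strictly interlacing the nonzero eigenvalues:
`λ_1 > η_1 > λ_2 > η_2 > … > λ_ψ > η_ψ > 0`. -/
theorem stmt11 {p : ℕ} (n ψ : ℕ) (hn : 0 < n) (hψn : ψ ≤ n - 1)
    (S : Matrix (Fin p) (Fin p) ℝ)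
    (lam : Fin ψ → ℝ) (v : Fin ψ → Fin p → ℝ)
    (hortho : ∀ i j, v i ⬝ᵥ v j = if i = j then (1 : ℝ) else 0)
    (hpos : ∀ i, 0 < lam i) (hanti : StrictAnti lam)
    (hdecomp : S = ∑ i, lam i • vecMulVec (v i) (v i)) :
    ∃ η : Fin ψ → ℝ,
      StrictAnti η ∧ (∀ i, 0 < η i) ∧ (∀ i, η i < lam i) ∧
      (∀ i : Fin ψ, ∀ h : (i : ℕ) + 1 < ψ, lam ⟨(i : ℕ) + 1, h⟩ < η i) ∧
      (∀ i, mbarReal p n S (η i) = 0) ∧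
      (∀ x : ℝ, 0 < x → (∀ i, x ≠ lam i) → mbarReal p n S x = 0 → ∃ i, x = η i) := by
  classical
  have hψltn : (ψ : ℝ) < n := by exact_mod_cast (by omega : ψ < n)
  have hn0 : ((n : ℝ)) ≠ 0 := Nat.cast_ne_zero.mpr hn.ne'
  set F : ℝ → ℝ := fun x => ((ψ : ℝ) - n) * x⁻¹ + ∑ i, (lam i - x)⁻¹ with hF
  set L : Fin ψ → ℝ := fun i => if h : (i : ℕ) + 1 < ψ then lam ⟨(i : ℕ) + 1, h⟩ else 0 with hL
  have hLnonneg : ∀ i, 0 ≤ L i := by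
    intro i; rw [hL]; dsimp only; split
    · exact (hpos _).le
    · exact le_refl 0
  have hLlt : ∀ i, L i < lam i := by
    intro i; rw [hL]; dsimp only; split
    · exact hanti (by simp [Fin.lt_def])
    · exact hpos i
  have hmem : ∀ i : Fin ψ, ∀ x ∈ Set.Ioo (L i) (lam i), 0 < x ∧ ∀ j, x ≠ lam j := by
    intro i x hx
    have hx0 : 0 < x := lt_of_le_of_lt (hLnonneg i) hx.1
    refine ⟨hx0, fun j => ?_⟩
    rcases le_or_gt j i with hji | hij
    · exact ne_of_lt (lt_of_lt_of_le hx.2 (hanti.antitone hji))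
    · have h1 : (i : ℕ) + 1 < ψ := lt_of_le_of_lt (Nat.succ_le_of_lt hij) j.isLt
      have hle : (⟨(i : ℕ) + 1, h1⟩ : Fin ψ) ≤ j := by
        simpa [Fin.le_def] using Nat.succ_le_of_lt hij
      have : lam j ≤ L i := by
        rw [hL]; dsimp only; rw [dif_pos h1]; exact hanti.antitone hle
      exact ne_of_gt (lt_of_le_of_lt this hx.1)
  have hcont : ∀ i, ContinuousOn F (Set.Ioo (L i) (lam i)) := by
    intro i x hx
    obtain ⟨hx0, hxl⟩ := hmem i x hx
    exact ((F_hasDerivAt ψ n lam hx0.ne' hxl).differentiableAt).continuousAt.continuousWithinAt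
  have hmono : ∀ i, StrictMonoOn F (Set.Ioo (L i) (lam i)) := by
    intro i
    apply strictMonoOn_of_deriv_pos (convex_Ioo _ _) (hcont i)
    intro x hx
    rw [interior_Ioo] at hx
    obtain ⟨hx0, hxl⟩ := hmem i x hx
    rw [(F_hasDerivAt ψ n lam hx0.ne' hxl).deriv]
    have h1 : (0:ℝ) < ((ψ : ℝ) - n) * (-(x ^ 2)⁻¹) := by
      have : ((ψ : ℝ) - n) * (-(x ^ 2)⁻¹) = ((n : ℝ) - ψ) * (x ^ 2)⁻¹ := by ring
      rw [this]
      exact mul_pos (sub_pos.mpr hψltn) (inv_pos.mpr (by positivity))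
    have h2 : (0:ℝ) ≤ ∑ i, ((lam i - x) ^ 2)⁻¹ :=
      Finset.sum_nonneg fun j _ => inv_nonneg.mpr (sq_nonneg _)
    linarith
  -- divergence at the right endpoint
  have htop : ∀ i, Tendsto F (𝓝[Set.Ioo (L i) (lam i)] (lam i)) atTop := by
    intro i
    have hFeq : ∀ x, F x = (lam i - x)⁻¹ +
        (((ψ : ℝ) - n) * x⁻¹ + ∑ j ∈ Finset.univ.erase i, (lam j - x)⁻¹) := by
      intro x
      rw [hF]; dsimp only
      rw [← Finset.add_sum_erase _ _ (Finset.mem_univ i)]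
      ring
    have h1 : Tendsto (fun x => (lam i - x)⁻¹) (𝓝[Set.Ioo (L i) (lam i)] (lam i)) atTop := by
      apply tendsto_inv_nhdsGT_zero.comp
      rw [tendsto_nhdsWithin_iff]
      constructor
      · have : Tendsto (fun x : ℝ => lam i - x) (𝓝 (lam i)) (𝓝 (lam i - lam i)) :=
          (continuous_const.sub continuous_id).tendsto _
        simpa using this.mono_left nhdsWithin_le_nhds
      · filter_upwards [self_mem_nhdsWithin] with x hx
        exact sub_pos.mpr hx.2
    have h2 : Tendsto (fun x => ((ψ : ℝ) - n) * x⁻¹ + ∑ j ∈ Finset.univ.erase i, (lam j - x)⁻¹)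
        (𝓝[Set.Ioo (L i) (lam i)] (lam i))
        (𝓝 (((ψ : ℝ) - n) * (lam i)⁻¹ + ∑ j ∈ Finset.univ.erase i, (lam j - lam i)⁻¹)) := by
      apply Tendsto.mono_left _ nhdsWithin_le_nhds
      apply Tendsto.add
      · exact (continuousAt_const.mul (continuousAt_id.inv₀ (hpos i).ne')).tendsto
      · apply tendsto_finset_sum
        intro j hj
        have hne : lam j - lam i ≠ 0 :=
          sub_ne_zero.mpr fun h => (Finset.mem_erase.mp hj).1 (hanti.injective h)
        exact ((continuousAt_const.sub continuousAt_id).inv₀ hne).tendsto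
    exact (h1.atTop_add h2).congr fun x => (hFeq x).symm
  -- divergence at the left endpoint
  have hbot : ∀ i, Tendsto F (𝓝[Set.Ioo (L i) (lam i)] (L i)) atBot := by
    intro i
    by_cases h : (i : ℕ) + 1 < ψ
    · set j₀ : Fin ψ := ⟨(i : ℕ) + 1, h⟩ with hj₀
      have hLi : L i = lam j₀ := by rw [hL]; exact dif_pos h
      have hFeq : ∀ x, F x = (lam j₀ - x)⁻¹ +
          (((ψ : ℝ) - n) * x⁻¹ + ∑ j ∈ Finset.univ.erase j₀, (lam j - x)⁻¹) := by
        intro x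
        rw [hF]; dsimp only
        rw [← Finset.add_sum_erase _ _ (Finset.mem_univ j₀)]
        ring
      have h1' : Tendsto (fun x => (x - lam j₀)⁻¹) (𝓝[Set.Ioo (L i) (lam i)] (L i)) atTop := by
        apply tendsto_inv_nhdsGT_zero.comp
        rw [tendsto_nhdsWithin_iff]
        constructor
        · have : Tendsto (fun x : ℝ => x - lam j₀) (𝓝 (L i)) (𝓝 (L i - lam j₀)) :=
            (continuous_id.sub continuous_const).tendsto _
          have h0 : L i - lam j₀ = 0 := by rw [hLi, sub_self]
          rw [h0] at this
          exact this.mono_left nhdsWithin_le_nhds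
        · filter_upwards [self_mem_nhdsWithin] with x hx
          rw [Set.mem_Ioi, sub_pos, ← hLi]
          exact hx.1
      have h1 : Tendsto (fun x => (lam j₀ - x)⁻¹) (𝓝[Set.Ioo (L i) (lam i)] (L i)) atBot := by
        have := (tendsto_neg_atTop_atBot).comp h1'
        refine this.congr fun x => ?_
        simp only [Function.comp_apply]
        rw [← inv_neg, neg_sub]
      have h2 : Tendsto (fun x => ((ψ : ℝ) - n) * x⁻¹ + ∑ j ∈ Finset.univ.erase j₀, (lam j - x)⁻¹)
          (𝓝[Set.Ioo (L i) (lam i)] (L i))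
          (𝓝 (((ψ : ℝ) - n) * (lam j₀)⁻¹ + ∑ j ∈ Finset.univ.erase j₀, (lam j - lam j₀)⁻¹)) := by
        rw [hLi]
        apply Tendsto.mono_left _ nhdsWithin_le_nhds
        apply Tendsto.add
        · exact (continuousAt_const.mul (continuousAt_id.inv₀ (hpos j₀).ne')).tendsto
        · apply tendsto_finset_sum
          intro j hj
          have hne : lam j - lam j₀ ≠ 0 :=
            sub_ne_zero.mpr fun hh => (Finset.mem_erase.mp hj).1 (hanti.injective hh)
          exact ((continuousAt_const.sub continuousAt_id).inv₀ hne).tendsto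
      exact (h1.atBot_add h2).congr fun x => (hFeq x).symm
    · have hLi : L i = 0 := by rw [hL]; exact dif_neg h
      have h1' : Tendsto (fun x : ℝ => x⁻¹) (𝓝[Set.Ioo (L i) (lam i)] (L i)) atTop := by
        apply tendsto_inv_nhdsGT_zero.comp
        rw [tendsto_nhdsWithin_iff]
        constructor
        · rw [hLi]
          exact tendsto_id.mono_left nhdsWithin_le_nhds
        · filter_upwards [self_mem_nhdsWithin] with x hx
          exact lt_of_le_of_lt (hLnonneg i) hx.1
      have h1 : Tendsto (fun x : ℝ => ((ψ : ℝ) - n) * x⁻¹)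
          (𝓝[Set.Ioo (L i) (lam i)] (L i)) atBot :=
        (tendsto_const_mul_atBot_of_neg (sub_neg.mpr hψltn)).mpr h1'
      have h2 : Tendsto (fun x => ∑ j, (lam j - x)⁻¹)
          (𝓝[Set.Ioo (L i) (lam i)] (L i)) (𝓝 (∑ j, (lam j - L i)⁻¹)) := by
        apply Tendsto.mono_left _ nhdsWithin_le_nhds
        apply tendsto_finset_sum
        intro j _
        have hne : lam j - L i ≠ 0 := by rw [hLi]; simpa using (hpos j).ne'
        exact ((continuousAt_const.sub continuousAt_id).inv₀ hne).tendsto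
      exact h1.atBot_add h2
  -- existence of the zeros
  have hex : ∀ i, ∃ e ∈ Set.Ioo (L i) (lam i), F e = 0 :=
    fun i => exists_zero_Ioo F (hLlt i) (hcont i) (htop i) (hbot i)
  choose η hηmem hηzero using hex
  have hηIoo : ∀ i, η i ∈ Set.Ioo (L i) (lam i) := hηmem
  have hLeq : ∀ (i : Fin ψ) (h : (i : ℕ) + 1 < ψ), L i = lam ⟨(i : ℕ) + 1, h⟩ := by
    intro i h; rw [hL]; exact dif_pos h
  refine ⟨η, ?_, ?_, ?_, ?_, ?_, ?_⟩
  · -- StrictAnti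
    intro i j hij
    have h1 : (i : ℕ) + 1 < ψ := lt_of_le_of_lt (Nat.succ_le_of_lt hij) j.isLt
    have hle : (⟨(i : ℕ) + 1, h1⟩ : Fin ψ) ≤ j := by
      simpa [Fin.le_def] using Nat.succ_le_of_lt hij
    calc η j < lam j := (hηIoo j).2
      _ ≤ lam ⟨(i : ℕ) + 1, h1⟩ := hanti.antitone hle
      _ = L i := (hLeq i h1).symm
      _ < η i := (hηIoo i).1
  · exact fun i => lt_of_le_of_lt (hLnonneg i) (hηIoo i).1
  · exact fun i => (hηIoo i).2
  · intro i h
    rw [← hLeq i h]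
    exact (hηIoo i).1
  · intro i
    obtain ⟨hx0, hxl⟩ := hmem i (η i) (hηIoo i)
    rw [mbar_formula n ψ hn S lam v hortho hdecomp (η i) hx0.ne' hxl]
    rw [show (((ψ : ℝ) - n) * (η i)⁻¹ + ∑ j, (lam j - η i)⁻¹) = F (η i) from rfl, hηzero i,
      mul_zero]
  · intro x hx0 hxl hzero
    rw [mbar_formula n ψ hn S lam v hortho hdecomp x hx0.ne' hxl] at hzero
    have hFx : F x = 0 := by
      rcases mul_eq_zero.mp hzero with h | h
      · exact absurd h (inv_ne_zero hn0)
      · exact h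
    set A : Finset (Fin ψ) := Finset.univ.filter (fun j => x < lam j) with hA
    rcases Finset.eq_empty_or_nonempty A with hAe | hAne
    · -- x is above all eigenvalues : F x < 0, contradiction
      exfalso
      have hall : ∀ j, lam j < x := by
        intro j
        have : j ∉ A := hAe ▸ Finset.notMem_empty j
        rw [hA, Finset.mem_filter] at this
        push_neg at this
        exact lt_of_le_of_ne (this (Finset.mem_univ j)) (Ne.symm (hxl j))
      have h1 : ((ψ : ℝ) - n) * x⁻¹ < 0 :=
        mul_neg_of_neg_of_pos (sub_neg.mpr hψltn) (inv_pos.mpr hx0)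
      have h2 : (∑ j, (lam j - x)⁻¹) ≤ 0 :=
        Finset.sum_nonpos fun j _ => inv_nonpos.mpr (sub_nonpos.mpr (hall j).le)
      have : F x < 0 := by
        rw [hF]; dsimp only; linarith
      rw [hFx] at this
      exact lt_irrefl 0 this
    · let i := A.max' hAne
      have hiA : i ∈ A := A.max'_mem hAne
      have hxlam : x < lam i := (Finset.mem_filter.mp hiA).2
      have hxL : L i < x := by
        rw [hL]; dsimp only; split
        case isTrue h =>
          have hnot : (⟨(i : ℕ) + 1, h⟩ : Fin ψ) ∉ A := by
            intro hmem'
            have := A.le_max' _ hmem'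
            exact absurd this (not_le.mpr (show (i : Fin ψ) < ⟨(i : ℕ) + 1, h⟩ by
              simp [Fin.lt_def]))
          rw [hA, Finset.mem_filter] at hnot
          push_neg at hnot
          exact lt_of_le_of_ne (hnot (Finset.mem_univ _)) (Ne.symm (hxl _))
        case isFalse h => exact hx0
      have hxmem : x ∈ Set.Ioo (L i) (lam i) := ⟨hxL, hxlam⟩
      refine ⟨i, (hmono i).injOn hxmem (hηIoo i) ?_⟩
      rw [hFx, hηzero i]
end
end

section
/- Let S ∈ ℝ^{p×p} be symmetric positive semidefinite with exactly ψ simple nonzero eigenvalues λ_1 > … > λ_ψ > 0 and corresponding orthonormal eigenvectors v_1,…,v_ψ, with ψ ≤ n − 1 for a positive integer n, let a ∈ ℝ^p, and define s_n, m_n, m̄_n as the Stieltjes transforms associated with S. Fix an index i ∈ {1,…,ψ} and an integer j ≥ 1, and set f_{jn}(z) = z s_n(z) m̄_n′(z)/m̄_n(z)^{j+1}. Then for all sufficiently small ε > 0, (2πi)⁻¹ ∮_{|z−λ_i|=ε} f_{jn}(z) dz = −n λ_i (aᵀv_i)² if j = 1, and the integral equals 0 for every j ≥ 2 (i.e.,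 f_{jn} extends analytically across λ_i when j ≥ 2). -/
open Matrix Filter Topology
open scoped BigOperators

noncomputable section

/-- Complex resolvent `(S − zI)⁻¹` of a real matrix. -/
def resolventC (p : ℕ) (S : Matrix (Fin p) (Fin p) ℝ) (z : ℂ) :
    Matrix (Fin p) (Fin p) ℂ :=
  (S.map (fun x => (x : ℂ)) - z • 1)⁻¹

/-- Stieltjes transform of the ESD of `S`: `m_n(z) = p⁻¹ tr (S − zI)⁻¹`. -/
def mEsd (p : ℕ) (S : Matrix (Fin p) (Fin p) ℝ) (z : ℂ) : ℂ :=
  (p : ℂ)⁻¹ * (resolventC p S z).trace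

/-- Stieltjes transform of the VESD of `S` relative to `a`: `s_n(z) = aᵀ(S − zI)⁻¹a`. -/
def sVesd (p : ℕ) (S : Matrix (Fin p) (Fin p) ℝ) (a : Fin p → ℝ) (z : ℂ) : ℂ :=
  (fun i => (a i : ℂ)) ⬝ᵥ (resolventC p S z *ᵥ fun i => (a i : ℂ))

/-- Companion Stieltjes transform `m̄_n(z) = −(1−c_n)/z + c_n m_n(z)`, `c_n = p/n`. -/
def mbarC (p n : ℕ) (S : Matrix (Fin p) (Fin p) ℝ) (z : ℂ) : ℂ :=
  -(1 - (p : ℂ) / (n : ℂ)) / z + (p : ℂ) / (n : ℂ) * mEsd p S z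

namespace Stmt13Aux

variable {p ψ : ℕ}

/-- complexified eigenvector -/
def vC (v : Fin ψ → Fin p → ℝ) (k : Fin ψ) : Fin p → ℂ := fun t => ((v k t : ℝ) : ℂ)

def PC (v : Fin ψ → Fin p → ℝ) (k : Fin ψ) : Matrix (Fin p) (Fin p) ℂ :=
  vecMulVec (vC v k) (vC v k)

lemma vC_dot (v : Fin ψ → Fin p → ℝ) (k l : Fin ψ)
    (hortho : ∀ i j, v i ⬝ᵥ v j = if i = j then (1 : ℝ) else 0) :
    vC v k ⬝ᵥ vC v l = if k = l then (1 : ℂ) else 0 := by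
  have := hortho k l
  have h2 : ((v k ⬝ᵥ v l : ℝ) : ℂ) = if k = l then (1:ℂ) else 0 := by
    rw [this]; split <;> simp
  rw [← h2]
  simp [dotProduct, vC]

lemma PC_mul_PC (v : Fin ψ → Fin p → ℝ)
    (hortho : ∀ i j, v i ⬝ᵥ v j = if i = j then (1 : ℝ) else 0) (k l : Fin ψ) :
    PC v k * PC v l = if k = l then PC v k else 0 := by
  have hd := vC_dot v k l hortho
  ext a b
  simp only [PC, Matrix.mul_apply, vecMulVec_apply]
  have : ∑ t, vC v k a * vC v k t * (vC v l t * vC v l b)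
      = vC v k a * vC v l b * (vC v k ⬝ᵥ vC v l) := by
    simp [dotProduct, Finset.mul_sum]; ring_nf
    exact Finset.sum_congr rfl fun t _ => by ring
  rw [this, hd]
  split
  · subst ‹k = l›; simp [vecMulVec_apply, PC]
  · simp

end Stmt13Aux

namespace Stmt13Aux

variable {p ψ : ℕ}

lemma T_mul_T (v : Fin ψ → Fin p → ℝ)
    (hortho : ∀ i j, v i ⬝ᵥ v j = if i = j then (1 : ℝ) else 0) :
    (∑ k, PC v k) * (∑ k, PC v k) = ∑ k, PC v k := by
  rw [Finset.sum_mul]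
  refine Finset.sum_congr rfl fun k _ => ?_
  rw [Finset.mul_sum]
  simp [PC_mul_PC v hortho]

lemma PC_mul_T (v : Fin ψ → Fin p → ℝ)
    (hortho : ∀ i j, v i ⬝ᵥ v j = if i = j then (1 : ℝ) else 0) (k : Fin ψ) :
    PC v k * (∑ l, PC v l) = PC v k := by
  rw [Finset.mul_sum]; simp [PC_mul_PC v hortho]

lemma T_mul_PC (v : Fin ψ → Fin p → ℝ)
    (hortho : ∀ i j, v i ⬝ᵥ v j = if i = j then (1 : ℝ) else 0) (k : Fin ψ) :
    (∑ l, PC v l) * PC v k = PC v k := by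
  rw [Finset.sum_mul]
  simp [PC_mul_PC v hortho]

lemma SC_eq (S : Matrix (Fin p) (Fin p) ℝ) (lam : Fin ψ → ℝ) (v : Fin ψ → Fin p → ℝ)
    (hdecomp : S = ∑ i, lam i • vecMulVec (v i) (v i)) :
    S.map (fun x => (x : ℂ)) = ∑ k, ((lam k : ℝ) : ℂ) • PC v k := by
  subst hdecomp
  ext a b
  simp [Matrix.map_apply, PC, vC, vecMulVec_apply, Matrix.sum_apply]

/-- explicit resolvent -/
def RC (lam : Fin ψ → ℝ) (v : Fin ψ → Fin p → ℝ) (z : ℂ) : Matrix (Fin p) (Fin p) ℂ :=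
  ∑ k, (((lam k : ℝ) : ℂ) - z)⁻¹ • PC v k + (-z)⁻¹ • (1 - ∑ k, PC v k)

lemma resolvent_eq (S : Matrix (Fin p) (Fin p) ℝ) (lam : Fin ψ → ℝ) (v : Fin ψ → Fin p → ℝ)
    (hortho : ∀ i j, v i ⬝ᵥ v j = if i = j then (1 : ℝ) else 0)
    (hdecomp : S = ∑ i, lam i • vecMulVec (v i) (v i))
    {z : ℂ} (hz0 : z ≠ 0) (hzl : ∀ k, z ≠ ((lam k : ℝ) : ℂ)) :
    resolventC p S z = RC lam v z := by
  apply Matrix.inv_eq_right_inv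
  rw [SC_eq S lam v hdecomp]
  set T := ∑ k, PC v k with hT
  have hsplit : (∑ k, ((lam k : ℝ) : ℂ) • PC v k) - z • (1 : Matrix (Fin p) (Fin p) ℂ)
      = ∑ k, (((lam k : ℝ) : ℂ) - z) • PC v k + (-z) • (1 - T) := by
    simp only [sub_smul, neg_smul, smul_sub, Finset.sum_sub_distrib]
    rw [hT, Finset.smul_sum]
    abel
  rw [hsplit, RC]
  rw [add_mul, mul_add, mul_add]
  have h1 : (∑ k, (((lam k : ℝ) : ℂ) - z) • PC v k) * (∑ k, (((lam k : ℝ) : ℂ) - z)⁻¹ • PC v k)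
      = T := by
    rw [Finset.sum_mul]
    refine Finset.sum_congr rfl fun k _ => ?_
    rw [Finset.mul_sum]
    have : ∀ l, ((((lam k : ℝ) : ℂ) - z) • PC v k) * ((((lam l : ℝ) : ℂ) - z)⁻¹ • PC v l)
        = ((((lam k : ℝ) : ℂ) - z) * (((lam l : ℝ) : ℂ) - z)⁻¹) • (PC v k * PC v l) := by
      intro l; rw [smul_mul_assoc, mul_smul_comm, smul_smul]
    simp only [this, PC_mul_PC v hortho]
    rw [Finset.sum_eq_single k]
    · rw [if_pos rfl, mul_inv_cancel₀ (sub_ne_zero.2 (fun h => hzl k (by rw [h]))), one_smul]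
    · intro l _ hlk; rw [if_neg (Ne.symm hlk), smul_zero]
    · intro h; exact absurd (Finset.mem_univ k) h
  have h2 : (∑ k, (((lam k : ℝ) : ℂ) - z) • PC v k) * ((-z)⁻¹ • (1 - T)) = 0 := by
    rw [Finset.sum_mul]
    refine Finset.sum_eq_zero fun k _ => ?_
    rw [smul_mul_assoc, mul_smul_comm, mul_sub, mul_one, PC_mul_T v hortho, sub_self,
      smul_zero, smul_zero]
  have h3 : ((-z) • (1 - T)) * (∑ k, (((lam k : ℝ) : ℂ) - z)⁻¹ • PC v k) = 0 := by
    rw [Finset.mul_sum]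
    refine Finset.sum_eq_zero fun k _ => ?_
    rw [smul_mul_assoc, mul_smul_comm, sub_mul, one_mul, T_mul_PC v hortho, sub_self,
      smul_zero, smul_zero]
  have h4 : ((-z) • (1 - T)) * ((-z)⁻¹ • (1 - T)) = 1 - T := by
    rw [smul_mul_assoc, mul_smul_comm, smul_smul, mul_inv_cancel₀ (neg_ne_zero.2 hz0)]
    rw [sub_mul, one_mul, mul_sub, mul_one, T_mul_T v hortho, sub_self, sub_zero, one_smul]
  rw [h1, h2, h3, h4]
  abel

end Stmt13Aux

namespace Stmt13Aux

variable {p ψ : ℕ}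

lemma trace_PC (v : Fin ψ → Fin p → ℝ)
    (hortho : ∀ i j, v i ⬝ᵥ v j = if i = j then (1 : ℝ) else 0) (k : Fin ψ) :
    (PC v k).trace = 1 := by
  have h := hortho k k
  rw [if_pos rfl] at h
  have : (PC v k).trace = ((v k ⬝ᵥ v k : ℝ) : ℂ) := by
    simp [Matrix.trace, Matrix.diag, PC, vC, vecMulVec_apply, dotProduct]
  rw [this, h]; norm_num

lemma trace_RC (lam : Fin ψ → ℝ) (v : Fin ψ → Fin p → ℝ)
    (hortho : ∀ i j, v i ⬝ᵥ v j = if i = j then (1 : ℝ) else 0) (z : ℂ) :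
    (RC lam v z).trace = ∑ k, (((lam k : ℝ) : ℂ) - z)⁻¹ + (-z)⁻¹ * ((p : ℂ) - (ψ : ℂ)) := by
  rw [RC, Matrix.trace_add, Matrix.trace_sum, Matrix.trace_smul, Matrix.trace_sub,
    Matrix.trace_one, Matrix.trace_sum]
  simp only [Matrix.trace_smul, trace_PC v hortho, smul_eq_mul, mul_one]
  simp [Finset.card_univ, smul_eq_mul, mul_sub]

lemma sum_mulVec {M : Fin ψ → Matrix (Fin p) (Fin p) ℂ} (x : Fin p → ℂ) :
    (∑ k, M k) *ᵥ x = ∑ k, (M k *ᵥ x) :=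
  map_sum (Matrix.mulVec.addMonoidHomLeft x) M Finset.univ

lemma dot_sum (x : Fin p → ℂ) (f : Fin ψ → Fin p → ℂ) :
    x ⬝ᵥ (∑ k, f k) = ∑ k, x ⬝ᵥ f k := by
  simp only [dotProduct, Finset.sum_apply, Finset.mul_sum]
  rw [Finset.sum_comm]

lemma dot_PC (v : Fin ψ → Fin p → ℝ) (a : Fin p → ℝ) (k : Fin ψ) :
    (fun t => ((a t : ℝ) : ℂ)) ⬝ᵥ (PC v k *ᵥ fun t => ((a t : ℝ) : ℂ))
      = ((a ⬝ᵥ v k : ℝ) : ℂ) ^ 2 := by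
  have h : ((a ⬝ᵥ v k : ℝ) : ℂ) = ∑ t, ((a t : ℝ) : ℂ) * vC v k t := by
    simp [dotProduct, vC]
  rw [h, sq, Finset.sum_mul_sum]
  simp only [dotProduct, mulVec, PC, vecMulVec_apply, Finset.mul_sum]
  refine Finset.sum_congr rfl fun s _ => Finset.sum_congr rfl fun t _ => by ring

lemma dot_aa (a : Fin p → ℝ) :
    (fun t => ((a t : ℝ) : ℂ)) ⬝ᵥ (fun t => ((a t : ℝ) : ℂ)) = ((a ⬝ᵥ a : ℝ) : ℂ) := by
  simp [dotProduct]

lemma sVesd_eq (S : Matrix (Fin p) (Fin p) ℝ) (lam : Fin ψ → ℝ) (v : Fin ψ → Fin p → ℝ)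
    (hortho : ∀ i j, v i ⬝ᵥ v j = if i = j then (1 : ℝ) else 0)
    (hdecomp : S = ∑ i, lam i • vecMulVec (v i) (v i)) (a : Fin p → ℝ)
    {z : ℂ} (hz0 : z ≠ 0) (hzl : ∀ k, z ≠ ((lam k : ℝ) : ℂ)) :
    sVesd p S a z = ∑ k, (((lam k : ℝ) : ℂ) - z)⁻¹ * ((a ⬝ᵥ v k : ℝ) : ℂ) ^ 2
      + (-z)⁻¹ * (((a ⬝ᵥ a : ℝ) : ℂ) - ∑ k, ((a ⬝ᵥ v k : ℝ) : ℂ) ^ 2) := by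
  rw [sVesd, resolvent_eq S lam v hortho hdecomp hz0 hzl, RC]
  set aC : Fin p → ℂ := fun t => ((a t : ℝ) : ℂ) with haC
  rw [Matrix.add_mulVec, dotProduct_add]
  congr 1
  · rw [sum_mulVec, dot_sum]
    refine Finset.sum_congr rfl fun k _ => ?_
    rw [Matrix.smul_mulVec, dotProduct_smul, smul_eq_mul, dot_PC v a k]
  · rw [Matrix.smul_mulVec, dotProduct_smul, smul_eq_mul]
    congr 1
    rw [Matrix.sub_mulVec, dotProduct_sub, Matrix.one_mulVec, dot_aa,
      sum_mulVec, dot_sum]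
    congr 1
    exact Finset.sum_congr rfl fun k _ => dot_PC v a k

end Stmt13Aux

namespace Stmt13Aux

variable {p ψ : ℕ}

def lC (lam : Fin ψ → ℝ) (k : Fin ψ) : ℂ := ((lam k : ℝ) : ℂ)

/-- model for `s_n` -/
def sM (lam : Fin ψ → ℝ) (b : Fin ψ → ℂ) (c : ℂ) (z : ℂ) : ℂ :=
  ∑ k, (lC lam k - z)⁻¹ * b k + (-z)⁻¹ * c

/-- model for `m̄_n` -/
def mM (n : ℕ) (ψ' : ℕ) (lam : Fin ψ → ℝ) (z : ℂ) : ℂ :=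
  (n : ℂ)⁻¹ * ∑ k, (lC lam k - z)⁻¹ - (1 - (ψ' : ℂ) / (n : ℂ)) / z

/-- model for `m̄_n'` -/
def mD (n : ℕ) (ψ' : ℕ) (lam : Fin ψ → ℝ) (z : ℂ) : ℂ :=
  (n : ℂ)⁻¹ * ∑ k, ((lC lam k - z)⁻¹) ^ 2 + (1 - (ψ' : ℂ) / (n : ℂ)) / z ^ 2

def sR (lam : Fin ψ → ℝ) (b : Fin ψ → ℂ) (c : ℂ) (i : Fin ψ) (z : ℂ) : ℂ :=
  ∑ k ∈ Finset.univ.erase i, (lC lam k - z)⁻¹ * b k + (-z)⁻¹ * c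

def mR (n : ℕ) (ψ' : ℕ) (lam : Fin ψ → ℝ) (i : Fin ψ) (z : ℂ) : ℂ :=
  (n : ℂ)⁻¹ * ∑ k ∈ Finset.univ.erase i, (lC lam k - z)⁻¹ - (1 - (ψ' : ℂ) / (n : ℂ)) / z

def mRD (n : ℕ) (ψ' : ℕ) (lam : Fin ψ → ℝ) (i : Fin ψ) (z : ℂ) : ℂ :=
  (n : ℂ)⁻¹ * ∑ k ∈ Finset.univ.erase i, ((lC lam k - z)⁻¹) ^ 2
    + (1 - (ψ' : ℂ) / (n : ℂ)) / z ^ 2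

def AA (lam : Fin ψ → ℝ) (b : Fin ψ → ℂ) (c : ℂ) (i : Fin ψ) (z : ℂ) : ℂ :=
  b i + (lC lam i - z) * sR lam b c i z

def BB (n : ℕ) (ψ' : ℕ) (lam : Fin ψ → ℝ) (i : Fin ψ) (z : ℂ) : ℂ :=
  (n : ℂ)⁻¹ + (lC lam i - z) * mR n ψ' lam i z

def CC (n : ℕ) (ψ' : ℕ) (lam : Fin ψ → ℝ) (i : Fin ψ) (z : ℂ) : ℂ :=
  (n : ℂ)⁻¹ + (lC lam i - z) ^ 2 * mRD n ψ' lam i z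

def GG (n : ℕ) (ψ' : ℕ) (lam : Fin ψ → ℝ) (b : Fin ψ → ℂ) (c : ℂ) (i : Fin ψ) (m : ℕ)
    (z : ℂ) : ℂ :=
  -(z * AA lam b c i z * CC n ψ' lam i z * (lC lam i - z) ^ m
      / (BB n ψ' lam i z) ^ (m + 2))

lemma split0 (w bi r : ℂ) (hw : w ≠ 0) : w⁻¹ * bi + r = w⁻¹ * (bi + w * r) := by
  field_simp

lemma split1 (w u s d : ℂ) (hw : w ≠ 0) :
    u * (w⁻¹ + s) - d = w⁻¹ * (u + w * (u * s - d)) := by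
  field_simp
  ring

lemma split2 (w u s d : ℂ) (hw : w ≠ 0) :
    u * ((w⁻¹) ^ 2 + s) + d = ((w⁻¹) ^ 2) * (u + w ^ 2 * (u * s + d)) := by
  field_simp
  ring

lemma sM_split (lam : Fin ψ → ℝ) (b : Fin ψ → ℂ) (c : ℂ) (i : Fin ψ) (z : ℂ)
    (hw : lC lam i - z ≠ 0) :
    sM lam b c z = (lC lam i - z)⁻¹ * AA lam b c i z := by
  rw [sM, AA, sR, ← Finset.add_sum_erase _ _ (Finset.mem_univ i), add_assoc]
  exact split0 _ _ _ hw

lemma mM_split (n ψ' : ℕ) (lam : Fin ψ → ℝ) (i : Fin ψ) (z : ℂ)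
    (hw : lC lam i - z ≠ 0) :
    mM n ψ' lam z = (lC lam i - z)⁻¹ * BB n ψ' lam i z := by
  rw [mM, BB, mR, ← Finset.add_sum_erase _ _ (Finset.mem_univ i)]
  exact split1 _ _ _ _ hw

lemma mD_split (n ψ' : ℕ) (lam : Fin ψ → ℝ) (i : Fin ψ) (z : ℂ)
    (hw : lC lam i - z ≠ 0) :
    mD n ψ' lam z = ((lC lam i - z)⁻¹) ^ 2 * CC n ψ' lam i z := by
  rw [mD, CC, mRD, ← Finset.add_sum_erase _ _ (Finset.mem_univ i)]
  exact split2 _ _ _ _ hw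

lemma key_alg (m : ℕ) (z w A B C : ℂ) (hw : w ≠ 0) (hB : B ≠ 0) :
    z * (w⁻¹ * A) * ((w⁻¹) ^ 2 * C) / (w⁻¹ * B) ^ (m + 1 + 1)
      = (z - (w + z))⁻¹ * -(z * A * C * w ^ m / B ^ (m + 1 + 1)) := by
  have h : z - (w + z) = -w := by ring
  rw [h]
  field_simp
  have hx : w ^ 2 * w ^ m * w⁻¹ ^ 2 * w⁻¹ ^ m = 1 := by
    rw [inv_pow, inv_pow]; field_simp
  linear_combination (z * A * C * B ^ 2 * B ^ m) * (-hx)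

lemma mbarC_eq (n : ℕ) (S : Matrix (Fin p) (Fin p) ℝ) (lam : Fin ψ → ℝ)
    (v : Fin ψ → Fin p → ℝ)
    (hortho : ∀ i j, v i ⬝ᵥ v j = if i = j then (1 : ℝ) else 0)
    (hdecomp : S = ∑ i, lam i • vecMulVec (v i) (v i))
    (hp : (p : ℂ) ≠ 0) (hn : (n : ℂ) ≠ 0)
    {z : ℂ} (hz0 : z ≠ 0) (hzl : ∀ k, z ≠ ((lam k : ℝ) : ℂ)) :
    mbarC p n S z = mM n ψ lam z := by
  rw [mbarC, mEsd, resolvent_eq S lam v hortho hdecomp hz0 hzl, trace_RC lam v hortho, mM]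
  simp only [lC]
  field_simp [hp, hn, hz0]
  ring

lemma hasDerivAt_inv_aux (c z : ℂ) (h : c - z ≠ 0) :
    HasDerivAt (fun z => (c - z)⁻¹) (((c - z)⁻¹) ^ 2) z := by
  have h1 : HasDerivAt (fun z : ℂ => c - z) (-1) z := (hasDerivAt_id z).const_sub c
  have h2 := h1.fun_inv h
  refine h2.congr_deriv ?_
  rw [inv_pow, neg_neg, one_div]

lemma hasDerivAt_mM (n ψ' : ℕ) (lam : Fin ψ → ℝ) {z : ℂ} (hz0 : z ≠ 0)
    (hzl : ∀ k, z ≠ ((lam k : ℝ) : ℂ)) :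
    HasDerivAt (mM n ψ' lam) (mD n ψ' lam z) z := by
  have hsum : HasDerivAt (fun z => (n : ℂ)⁻¹ * ∑ k, (lC lam k - z)⁻¹)
      ((n : ℂ)⁻¹ * ∑ k, ((lC lam k - z)⁻¹) ^ 2) z := by
    refine HasDerivAt.const_mul _ ?_
    exact HasDerivAt.fun_sum fun k _ =>
      hasDerivAt_inv_aux (lC lam k) z (sub_ne_zero.2 fun h => hzl k (by rw [← h]; rfl))
  have hinv : HasDerivAt (fun z : ℂ => (1 - (ψ' : ℂ) / (n : ℂ)) / z)
      (-((1 - (ψ' : ℂ) / (n : ℂ)) / z ^ 2)) z := by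
    have h2 := (hasDerivAt_inv hz0).const_mul (1 - (ψ' : ℂ) / (n : ℂ))
    simpa [div_eq_mul_inv, mul_neg] using h2
  have := hsum.sub hinv
  refine HasDerivAt.congr_deriv (f := mM n ψ' lam) this ?_
  rw [mD]
  ring

end Stmt13Aux

namespace Stmt13Aux

variable {p ψ : ℕ}

lemma diff_sR (lam : Fin ψ → ℝ) (b : Fin ψ → ℂ) (c : ℂ) (i : Fin ψ) {z : ℂ}
    (hz0 : z ≠ 0) (hzk : ∀ k, k ≠ i → z ≠ lC lam k) :
    DifferentiableAt ℂ (sR lam b c i) z := by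
  unfold sR
  refine DifferentiableAt.add ?_ ?_
  · refine DifferentiableAt.fun_sum fun k hk => ?_
    have hki : k ≠ i := Finset.ne_of_mem_erase hk
    exact (((differentiableAt_const _).sub differentiableAt_id).inv
      (sub_ne_zero.2 (Ne.symm (hzk k hki)))).mul (differentiableAt_const _)
  · exact ((differentiableAt_id.neg).inv (neg_ne_zero.2 hz0)).mul (differentiableAt_const _)

lemma diff_mR (n ψ' : ℕ) (lam : Fin ψ → ℝ) (i : Fin ψ) {z : ℂ}
    (hz0 : z ≠ 0) (hzk : ∀ k, k ≠ i → z ≠ lC lam k) :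
    DifferentiableAt ℂ (mR n ψ' lam i) z := by
  unfold mR
  refine DifferentiableAt.sub ?_ ?_
  · refine (differentiableAt_const _).mul (DifferentiableAt.fun_sum fun k hk => ?_)
    have hki : k ≠ i := Finset.ne_of_mem_erase hk
    exact ((differentiableAt_const _).sub differentiableAt_id).inv
      (sub_ne_zero.2 (Ne.symm (hzk k hki)))
  · exact (differentiableAt_const _).div differentiableAt_id hz0

lemma diff_mRD (n ψ' : ℕ) (lam : Fin ψ → ℝ) (i : Fin ψ) {z : ℂ}
    (hz0 : z ≠ 0) (hzk : ∀ k, k ≠ i → z ≠ lC lam k) :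
    DifferentiableAt ℂ (mRD n ψ' lam i) z := by
  unfold mRD
  refine DifferentiableAt.add ?_ ?_
  · refine (differentiableAt_const _).mul (DifferentiableAt.fun_sum fun k hk => ?_)
    have hki : k ≠ i := Finset.ne_of_mem_erase hk
    exact (((differentiableAt_const _).sub differentiableAt_id).inv
      (sub_ne_zero.2 (Ne.symm (hzk k hki)))).pow 2
  · exact (differentiableAt_const _).div (differentiableAt_id.pow 2) (pow_ne_zero 2 hz0)

lemma diff_AA (lam : Fin ψ → ℝ) (b : Fin ψ → ℂ) (c : ℂ) (i : Fin ψ) {z : ℂ}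
    (hz0 : z ≠ 0) (hzk : ∀ k, k ≠ i → z ≠ lC lam k) :
    DifferentiableAt ℂ (AA lam b c i) z := by
  unfold AA
  exact (differentiableAt_const _).add
    (((differentiableAt_const _).sub differentiableAt_id).mul (diff_sR lam b c i hz0 hzk))

lemma diff_BB (n ψ' : ℕ) (lam : Fin ψ → ℝ) (i : Fin ψ) {z : ℂ}
    (hz0 : z ≠ 0) (hzk : ∀ k, k ≠ i → z ≠ lC lam k) :
    DifferentiableAt ℂ (BB n ψ' lam i) z := by
  unfold BB
  exact (differentiableAt_const _).add
    (((differentiableAt_const _).sub differentiableAt_id).mul (diff_mR n ψ' lam i hz0 hzk))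

lemma diff_CC (n ψ' : ℕ) (lam : Fin ψ → ℝ) (i : Fin ψ) {z : ℂ}
    (hz0 : z ≠ 0) (hzk : ∀ k, k ≠ i → z ≠ lC lam k) :
    DifferentiableAt ℂ (CC n ψ' lam i) z := by
  unfold CC
  exact (differentiableAt_const _).add
    ((((differentiableAt_const _).sub differentiableAt_id).pow 2).mul
      (diff_mRD n ψ' lam i hz0 hzk))

lemma diff_GG (n ψ' : ℕ) (lam : Fin ψ → ℝ) (b : Fin ψ → ℂ) (c : ℂ) (i : Fin ψ) (m : ℕ)
    {z : ℂ} (hz0 : z ≠ 0) (hzk : ∀ k, k ≠ i → z ≠ lC lam k)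
    (hB : BB n ψ' lam i z ≠ 0) :
    DifferentiableAt ℂ (GG n ψ' lam b c i m) z := by
  unfold GG
  refine DifferentiableAt.neg ?_
  refine DifferentiableAt.div ?_ ((diff_BB n ψ' lam i hz0 hzk).pow _) (pow_ne_zero _ hB)
  exact ((differentiableAt_id.mul (diff_AA lam b c i hz0 hzk)).mul
    (diff_CC n ψ' lam i hz0 hzk)).mul
    (((differentiableAt_const _).sub differentiableAt_id).pow m)

lemma key_alg' (m : ℕ) (z lami A B C : ℂ) (hw : lami - z ≠ 0) (hzw : z - lami ≠ 0)
    (hB : B ≠ 0) :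
    z * ((lami - z)⁻¹ * A) * (((lami - z)⁻¹) ^ 2 * C) / ((lami - z)⁻¹ * B) ^ (m + 2)
      = (z - lami)⁻¹ * -(z * A * C * (lami - z) ^ m / B ^ (m + 2)) := by
  rw [show z - lami = -(lami - z) by ring]
  generalize lami - z = w at hw ⊢
  field_simp
  have hx : w ^ 2 * w ^ m * w⁻¹ ^ 2 * w⁻¹ ^ m = 1 := by
    rw [inv_pow, inv_pow]; field_simp
  linear_combination (z * A * C * B ^ 2 * B ^ m) * (-hx)

end Stmt13Aux


/-- residues of `f_{jn}(z) = z s_n(z) m̄_n′(z)/m̄_n(z)^{j+1}` at a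
simple nonzero eigenvalue `λ_i` of `S`.  For all sufficiently small `ε > 0`,
`(2πi)⁻¹ ∮_{|z−λ_i|=ε} f_{jn}(z) dz = −n λ_i (aᵀv_i)²` if `j = 1`, and the integral
vanishes for every `j ≥ 2`. -/
theorem stmt13 {p : ℕ} (n ψ : ℕ) (hn : 0 < n) (hψn : ψ ≤ n - 1)
    (S : Matrix (Fin p) (Fin p) ℝ)
    (lam : Fin ψ → ℝ) (v : Fin ψ → Fin p → ℝ)
    (hortho : ∀ i j, v i ⬝ᵥ v j = if i = j then (1 : ℝ) else 0)
    (hpos : ∀ i, 0 < lam i) (hanti : StrictAnti lam)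
    (hdecomp : S = ∑ i, lam i • vecMulVec (v i) (v i))
    (a : Fin p → ℝ)
    (i : Fin ψ) (j : ℕ) (hj : 1 ≤ j) :
    ∃ ε₀ > (0 : ℝ), ∀ ε : ℝ, 0 < ε → ε < ε₀ →
      (2 * (Real.pi : ℂ) * Complex.I)⁻¹ *
          (∮ z in C(((lam i : ℝ) : ℂ), ε),
            z * sVesd p S a z * deriv (mbarC p n S) z / (mbarC p n S z) ^ (j + 1)) =
        if j = 1 then -(n : ℂ) * ((lam i : ℝ) : ℂ) * ((a ⬝ᵥ v i : ℝ) : ℂ) ^ 2 else 0 := by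
  classical
  open Stmt13Aux in
  obtain ⟨m, rfl⟩ : ∃ m, j = m + 1 := ⟨j - 1, by omega⟩
  set b : Fin ψ → ℂ := fun k => ((a ⬝ᵥ v k : ℝ) : ℂ) ^ 2 with hb
  set c : ℂ := ((a ⬝ᵥ a : ℝ) : ℂ) - ∑ k, ((a ⬝ᵥ v k : ℝ) : ℂ) ^ 2 with hc
  have hnC : (n : ℂ) ≠ 0 := Nat.cast_ne_zero.2 hn.ne'
  have hp0 : p ≠ 0 := by
    rintro rfl
    have h := hortho i i
    simp [dotProduct] at h
  have hpC : (p : ℂ) ≠ 0 := Nat.cast_ne_zero.2 hp0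
  set li : ℂ := ((lam i : ℝ) : ℂ) with hli
  have hliC : lC lam i = li := rfl
  have hl_0 : li ≠ 0 := Complex.ofReal_ne_zero.2 (hpos i).ne'
  have hl_k : ∀ k, k ≠ i → lC lam k ≠ li := by
    intro k hk h
    exact hk (hanti.injective (Complex.ofReal_injective h))
  -- the bad set
  set E : Set ℂ := insert 0 (lC lam '' {k | k ≠ i}) with hE
  have hEfin : E.Finite := ((Set.toFinite {k | k ≠ i}).image _).insert 0
  have hmem : li ∈ Eᶜ := by
    simp only [hE, Set.mem_compl_iff, Set.mem_insert_iff, Set.mem_image, Set.mem_setOf_eq,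
      not_or, not_exists, not_and]
    exact ⟨hl_0.symm ∘ Eq.symm ∘ id, fun k hk => hl_k k hk⟩
  obtain ⟨r1, hr1, hball1⟩ := Metric.isOpen_iff.1 hEfin.isClosed.isOpen_compl li hmem
  -- BB nonzero near li
  have hBBl_ : BB n ψ lam i li = (n : ℂ)⁻¹ := by
    simp [BB, hliC]
  have hBne : BB n ψ lam i li ≠ 0 := by rw [hBBl_]; exact inv_ne_zero hnC
  have hcont : ContinuousAt (BB n ψ lam i) li :=
    (diff_BB n ψ lam i hl_0 (fun k hk => (hl_k k hk).symm)).continuousAt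
  have hev : ∀ᶠ w in 𝓝 li, BB n ψ lam i w ≠ 0 := hcont.eventually_ne hBne
  obtain ⟨r2, hr2, hball2⟩ := Metric.eventually_nhds_iff_ball.1 hev
  refine ⟨min r1 r2, lt_min hr1 hr2, fun ε hε hεlt => ?_⟩
  -- facts on the good ball
  have hgood : ∀ z ∈ Metric.ball li (min r1 r2),
      z ≠ 0 ∧ (∀ k, k ≠ i → z ≠ lC lam k) ∧ BB n ψ lam i z ≠ 0 := by
    intro z hz
    have h1 : z ∈ Eᶜ := hball1 (Metric.ball_subset_ball (min_le_left r1 r2) hz)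
    have h2 := hball2 z (Metric.ball_subset_ball (min_le_right r1 r2) hz)
    simp only [hE, Set.mem_compl_iff, Set.mem_insert_iff, Set.mem_image, Set.mem_setOf_eq,
      not_or, not_exists, not_and] at h1
    exact ⟨h1.1, fun k hk hzk => h1.2 k hk hzk.symm, h2⟩
  set G : ℂ → ℂ := GG n ψ lam b c i m with hG
  -- G is differentiable on the closed ball
  have hGdiff : DifferentiableOn ℂ G (Metric.closedBall li ε) := by
    intro z hz
    have hz' : z ∈ Metric.ball li (min r1 r2) := Metric.closedBall_subset_ball hεlt hz
    obtain ⟨h1, h2, h3⟩ := hgood z hz'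
    exact (diff_GG n ψ lam b c i m h1 (fun k hk => fun hh => h2 k hk hh) h3).differentiableWithinAt
  have hDC : DiffContOnCl ℂ G (Metric.ball li ε) :=
    (hGdiff.mono Metric.closure_ball_subset_closedBall).diffContOnCl
  have hC := hDC.two_pi_i_inv_smul_circleIntegral_sub_inv_smul (Metric.mem_ball_self hε)
  -- integrand equality on the sphere
  have hEqOn : Set.EqOn
      (fun z => z * sVesd p S a z * deriv (mbarC p n S) z / (mbarC p n S z) ^ (m + 1 + 1))
      (fun z => (z - li)⁻¹ • G z) (Metric.sphere li ε) := by
    intro z hz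
    have hzd : dist z li = ε := Metric.mem_sphere.1 hz
    have hzl_ : z ≠ li := by
      intro h; rw [h, dist_self] at hzd; exact hε.ne' hzd.symm
    have hzball : z ∈ Metric.ball li (min r1 r2) := by
      rw [Metric.mem_ball, hzd]; exact hεlt
    obtain ⟨hz0, hzk, hBB⟩ := hgood z hzball
    have hzl : ∀ k, z ≠ ((lam k : ℝ) : ℂ) := by
      intro k
      by_cases hk : k = i
      · rw [hk]; exact hzl_
      · exact hzk k hk
    have hw : lC lam i - z ≠ 0 := sub_ne_zero.2 (Ne.symm hzl_)
    have hzw : z - li ≠ 0 := sub_ne_zero.2 hzl_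
    have hsV : sVesd p S a z = sM lam b c z := by
      rw [sVesd_eq S lam v hortho hdecomp a hz0 hzl]; rfl
    have hmb : mbarC p n S z = mM n ψ lam z :=
      mbarC_eq n S lam v hortho hdecomp hpC hnC hz0 hzl
    have hdm : deriv (mbarC p n S) z = mD n ψ lam z := by
      have h1 := hasDerivAt_mM n ψ lam hz0 hzl
      have hop : IsOpen (Metric.ball li (min r1 r2) \ {li}) :=
        Metric.isOpen_ball.sdiff isClosed_singleton
      have hzU : z ∈ Metric.ball li (min r1 r2) \ {li} := ⟨hzball, hzl_⟩
      have hevd : mbarC p n S =ᶠ[𝓝 z] mM n ψ lam := by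
        filter_upwards [hop.mem_nhds hzU] with w hw'
        obtain ⟨hw1, hw2, _⟩ := hgood w hw'.1
        have hwl : ∀ k, w ≠ ((lam k : ℝ) : ℂ) := by
          intro k
          by_cases hk : k = i
          · rw [hk]; exact fun h => hw'.2 h
          · exact hw2 k hk
        exact mbarC_eq n S lam v hortho hdecomp hpC hnC hw1 hwl
      rw [hevd.deriv_eq, h1.deriv]
    show z * sVesd p S a z * deriv (mbarC p n S) z / (mbarC p n S z) ^ (m + 1 + 1)
        = (z - li)⁻¹ • G z
    rw [hsV, hdm, hmb, sM_split lam b c i z hw, mM_split n ψ lam i z hw,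
      mD_split n ψ lam i z hw, smul_eq_mul]
    have hexp : m + 1 + 1 = m + 2 := rfl
    rw [hexp, hliC, key_alg' m z li (AA lam b c i z) (BB n ψ lam i z) (CC n ψ lam i z)
      hw hzw hBB]
    rfl
  rw [circleIntegral.integral_congr hε.le hEqOn]
  have hC' : (2 * (Real.pi : ℂ) * Complex.I)⁻¹ *
      (∮ z in C(li, ε), (z - li)⁻¹ • G z) = G li := by
    simpa [smul_eq_mul] using hC
  rw [hC']
  -- evaluate G at li
  have hAAl_ : AA lam b c i li = b i := by simp [AA, hliC]
  have hCCl_ : CC n ψ lam i li = (n : ℂ)⁻¹ := by simp [CC, hliC]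
  cases m with
  | zero =>
    rw [if_pos rfl]
    rw [hG, GG, hAAl_, hCCl_, hBBl_, hliC]
    simp only [sub_self, pow_zero, mul_one, hb]
    field_simp
    have hx : (n : ℂ) ^ 2 * (n : ℂ)⁻¹ ^ 2 = 1 := by
      rw [← mul_pow, mul_inv_cancel₀ hnC, one_pow]
    linear_combination ((a ⬝ᵥ v i : ℝ) : ℂ) ^ 2 * hx
  | succ m' =>
    rw [if_neg (by omega)]
    rw [hG, GG, hliC]
    simp [sub_self, pow_succ]
end
end

section
/- Let n, p be positive integers, X ∈ ℝ^{p×n}, y ∈ ℝ^n, and P₁ = I_n − n⁻¹ 𝟙_n 𝟙_nᵀ the centering projection. Suppose rank(X P₁) = n − 1 (which requires p ≥ n − 1, e.g., when p > n and the data are in general position) and yᵀP₁y ≠ 0. Then for any matrix G ∈ ℝ^{p×p} satisfying the four Moore–Penrose conditions for A = X P₁ Xᵀ (namely AGA = A, GAG = G, (AG)ᵀ = AG, (GA)ᵀ = GA), the coefficient of determination degenerates to one: yᵀ P₁ Xᵀ G X P₁ y / (yᵀ P₁ y) = 1. -/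
open Matrix
open scoped BigOperators

noncomputable section

/-- The centering projection `P₁ = I_n − n⁻¹ 𝟙𝟙ᵀ`. -/
def centeringProj (n : ℕ) : Matrix (Fin n) (Fin n) ℝ :=
  1 - (n : ℝ)⁻¹ • vecMulVec (fun _ => (1 : ℝ)) (fun _ => (1 : ℝ))

lemma centeringProj_transpose (n : ℕ) : (centeringProj n)ᵀ = centeringProj n := by
  ext i j
  simp [centeringProj, Matrix.transpose_apply, vecMulVec_apply, Matrix.one_apply, eq_comm]

lemma centeringProj_mulVec_one (n : ℕ) (hn : 0 < n) :
    centeringProj n *ᵥ (fun _ => (1 : ℝ)) = 0 := by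
  funext i
  have hn' : (n : ℝ) ≠ 0 := by positivity
  simp [centeringProj, sub_mulVec, mulVec, dotProduct, vecMulVec_apply, Matrix.one_apply,
    Finset.sum_ite_eq, inv_mul_cancel₀ hn', mul_inv_cancel₀ hn']

lemma centeringProj_idem (n : ℕ) (hn : 0 < n) :
    centeringProj n * centeringProj n = centeringProj n := by
  have hn' : (n : ℝ) ≠ 0 := by positivity
  ext i j
  simp only [centeringProj, Matrix.sub_apply, Matrix.smul_apply, vecMulVec_apply,
    Matrix.mul_apply, Matrix.one_apply, smul_eq_mul, mul_one, sub_mul, mul_sub,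
    Finset.sum_sub_distrib, ite_mul, mul_ite, one_mul, zero_mul, Finset.sum_ite_eq,
    Finset.sum_ite_eq', Finset.sum_const, Finset.card_univ, Fintype.card_fin,
    nsmul_eq_mul, Finset.mem_univ, if_true]
  field_simp
  simp only [mul_zero, ite_self, sub_zero, zero_div, Finset.sum_ite_eq', Finset.mem_univ, if_true]
  split_ifs <;> field_simp <;> ring

/-- degeneracy of the pseudoinverse-based `R²` when `p > n`.
Let `X ∈ ℝ^{p×n}`, `y ∈ ℝ^n`, `P₁` the centering projection.  If
`rank(X P₁) = n − 1` and `yᵀP₁y ≠ 0`, then for any matrix `G` satisfying the four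
Moore–Penrose conditions for `A = X P₁ Xᵀ`, the coefficient of determination
degenerates: `yᵀP₁Xᵀ G X P₁ y / (yᵀP₁y) = 1`. -/
theorem stmt15 {n p : ℕ} (hn : 0 < n) (hp : 0 < p)
    (X : Matrix (Fin p) (Fin n) ℝ) (y : Fin n → ℝ)
    (hrank : (X * centeringProj n).rank = n - 1)
    (hy : y ⬝ᵥ (centeringProj n *ᵥ y) ≠ 0)
    (G : Matrix (Fin p) (Fin p) ℝ)
    (hMP1 : (X * centeringProj n * Xᵀ) * G * (X * centeringProj n * Xᵀ) =
      X * centeringProj n * Xᵀ)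
    (hMP2 : G * (X * centeringProj n * Xᵀ) * G = G)
    (hMP3 : ((X * centeringProj n * Xᵀ) * G)ᵀ = (X * centeringProj n * Xᵀ) * G)
    (hMP4 : (G * (X * centeringProj n * Xᵀ))ᵀ = G * (X * centeringProj n * Xᵀ)) :
    (X *ᵥ (centeringProj n *ᵥ y)) ⬝ᵥ (G *ᵥ (X *ᵥ (centeringProj n *ᵥ y))) /
        (y ⬝ᵥ (centeringProj n *ᵥ y)) = 1 := by
  set P : Matrix (Fin n) (Fin n) ℝ := centeringProj n with hPdef
  have hPsym : Pᵀ = P := centeringProj_transpose n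
  have hPidem : P * P = P := centeringProj_idem n hn
  have hPone : P *ᵥ (fun _ => (1 : ℝ)) = 0 := centeringProj_mulVec_one n hn
  clear_value P
  set B : Matrix (Fin p) (Fin n) ℝ := X * P with hBdef
  set A : Matrix (Fin p) (Fin p) ℝ := B * Xᵀ with hAdef
  have hABB : A = B * Bᵀ := by
    rw [hAdef, hBdef, Matrix.transpose_mul, hPsym]
    rw [← Matrix.mul_assoc, Matrix.mul_assoc X P P, hPidem]
  clear_value B A
  set Q : Matrix (Fin p) (Fin p) ℝ := A * G with hQdef
  clear_value Q
  have hQA : Q * A = A := hMP1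
  have hQsym : Qᵀ = Q := hMP3
  -- Step 1: Q * B = B
  have e1 : Q * B * (Bᵀ * Q) = A * Q := by
    rw [← Matrix.mul_assoc, Matrix.mul_assoc Q B Bᵀ, ← hABB, hQA]
  have e2 : Q * B * Bᵀ = A := by rw [Matrix.mul_assoc, ← hABB, hQA]
  have e3 : B * (Bᵀ * Q) = A * Q := by rw [← Matrix.mul_assoc, ← hABB]
  have hE : (Q * B - B) * (Q * B - B)ᵀ = 0 := by
    have hTE : (Q * B - B)ᵀ = Bᵀ * Q - Bᵀ := by
      rw [Matrix.transpose_sub, Matrix.transpose_mul, hQsym]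
    rw [hTE, Matrix.sub_mul, Matrix.mul_sub, Matrix.mul_sub, e1, e2, e3, ← hABB]
    abel
  have hQB : Q * B = B := by
    have h0 : Q * B - B = 0 := by
      rw [← Matrix.conjTranspose_eq_transpose_of_trivial] at hE
      exact Matrix.self_mul_conjTranspose_eq_zero.mp hE
    exact sub_eq_zero.mp h0
  -- the "hat" matrix
  set H : Matrix (Fin n) (Fin n) ℝ := Bᵀ * G * B with hHdef
  clear_value H
  have hBH : B * H = B := by
    rw [hHdef, ← Matrix.mul_assoc, ← Matrix.mul_assoc, ← hABB, ← hQdef, hQB]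
  have hBP : B * P = B := by rw [hBdef, Matrix.mul_assoc, hPidem]
  have hBD : B * (H - P) = 0 := by rw [Matrix.mul_sub, hBH, hBP, sub_self]
  -- kernel of B is spanned by the all-ones vector
  set o : Fin n → ℝ := fun _ => (1 : ℝ) with ho
  have hone_ne : o ≠ 0 := by
    intro h
    have := congrFun h ⟨0, hn⟩
    simp [ho] at this
  have hBone : B *ᵥ o = 0 := by
    rw [hBdef, ← Matrix.mulVec_mulVec, hPone, Matrix.mulVec_zero]
  have hker : LinearMap.ker B.mulVecLin = Submodule.span ℝ {o} := by
    have hle : Submodule.span ℝ {o} ≤ LinearMap.ker B.mulVecLin := by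
      rw [Submodule.span_singleton_le_iff_mem, LinearMap.mem_ker, Matrix.mulVecLin_apply]
      exact hBone
    have hrn := LinearMap.finrank_range_add_finrank_ker B.mulVecLin
    have hfr : Module.finrank ℝ (LinearMap.range B.mulVecLin) = n - 1 := hrank
    have hdim : Module.finrank ℝ (Fin n → ℝ) = n := by simp
    have hkd : Module.finrank ℝ (LinearMap.ker B.mulVecLin) = 1 := by
      rw [hfr, hdim] at hrn
      omega
    have hsd : Module.finrank ℝ (Submodule.span ℝ {o}) = 1 :=
      finrank_span_singleton hone_ne
    exact (Submodule.eq_of_le_of_finrank_le hle (by rw [hkd, hsd])).symm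
  -- (H - P) y lies in the kernel, hence is a multiple of the ones vector
  have hmem : (H - P) *ᵥ y ∈ LinearMap.ker B.mulVecLin := by
    rw [LinearMap.mem_ker, Matrix.mulVecLin_apply, Matrix.mulVec_mulVec, hBD,
      Matrix.zero_mulVec]
  rw [hker, Submodule.mem_span_singleton] at hmem
  obtain ⟨c, hc⟩ := hmem
  -- pairing with the ones vector kills it
  have hHTone : Hᵀ *ᵥ o = 0 := by
    rw [hHdef, Matrix.transpose_mul, Matrix.transpose_mul, Matrix.transpose_transpose,
      ← Matrix.mulVec_mulVec, ← Matrix.mulVec_mulVec, hBone]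
    simp
  have hPTone : Pᵀ *ᵥ o = 0 := by rw [hPsym]; exact hPone
  have hdot : o ⬝ᵥ ((H - P) *ᵥ y) = 0 := by
    rw [Matrix.dotProduct_mulVec, ← Matrix.mulVec_transpose, Matrix.transpose_sub,
      Matrix.sub_mulVec, hHTone, hPTone, sub_self, zero_dotProduct]
  have hcn : c * n = 0 := by
    have hoc : o ⬝ᵥ (c • o) = c * n := by
      simp [ho, dotProduct, Finset.mul_sum, mul_comm]
    rw [hc, hdot] at hoc
    exact hoc.symm
  have hc0 : c = 0 := by
    have hn' : (n : ℝ) ≠ 0 := by positivity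
    rcases mul_eq_zero.mp hcn with h | h
    · exact h
    · exact absurd h hn'
  have hDy : (H - P) *ᵥ y = 0 := by rw [← hc, hc0, zero_smul]
  have hHy : H *ᵥ y = P *ᵥ y := by
    have h2 := hDy
    rw [Matrix.sub_mulVec, sub_eq_zero] at h2
    exact h2
  -- rewrite the numerator
  have hnum : (X *ᵥ (P *ᵥ y)) ⬝ᵥ (G *ᵥ (X *ᵥ (P *ᵥ y))) = y ⬝ᵥ (P *ᵥ y) := by
    have h1 : X *ᵥ (P *ᵥ y) = B *ᵥ y := by rw [hBdef, Matrix.mulVec_mulVec]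
    rw [h1]
    calc (B *ᵥ y) ⬝ᵥ (G *ᵥ (B *ᵥ y))
        = y ⬝ᵥ (Bᵀ *ᵥ (G *ᵥ (B *ᵥ y))) := by
          rw [dotProduct_comm, Matrix.dotProduct_mulVec, ← Matrix.mulVec_transpose,
            dotProduct_comm]
      _ = y ⬝ᵥ (H *ᵥ y) := by
          rw [Matrix.mulVec_mulVec, Matrix.mulVec_mulVec, ← hHdef]
      _ = y ⬝ᵥ (P *ᵥ y) := by rw [hHy]
  rw [hnum, div_self hy]
end
end
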